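/- Let S be a submodule of a free module M of finite rank over 𝔽[x], with a fixed free basis K of M and a monomial order on the monomials {x^k · e : k ≥ 0, e ∈ K}. If B generates S over 𝔽[x] and the leading monomials of the elements of B are 𝔽[x]-multiples of pairwise distinct elements of K, then B is a Gröbner basis of S, and moreover B is a free basis of S. -/

import Mathlib

/-- The monomial support of an element of the free module `𝔽[x]^r`: the pairs `(k, j)`
such that the monomial `x^k · e_j` occurs in `f`. -/
def msupp {𝔽 : Type*} [Field 𝔽] {r : ℕ} (f : Fin r → Polynomial 𝔽) : Set (ℕ × Fin r) :=
  {m | (f m.2).coeff m.1 ≠ 0}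

/-- `m` is the leading monomial of `f` with respect to the monomial order `le`. -/
def IsLM {𝔽 : Type*} [Field 𝔽] {r : ℕ} (le : ℕ × Fin r → ℕ × Fin r → Prop)
    (f : Fin r → Polynomial 𝔽) (m : ℕ × Fin r) : Prop :=
  m ∈ msupp f ∧ ∀ m' ∈ msupp f, le m' m

/-- if `B` generates a submodule `S` of a free `𝔽[x]`-module and the leading
monomials of the elements of `B` (w.r.t. a monomial order `le`) are `𝔽[x]`-multiples of
pairwise distinct free-basis elements, then `B` is a Gröbner basis of `S` (every leading
monomial of a nonzero element of `S` is a monomial multiple of some `LM(b)`, `b ∈ B`),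
and moreover `B` is a free basis of `S`. -/
theorem groebner_criterion_and_free_basis
    {𝔽 : Type*} [Field 𝔽] {r : ℕ}
    (le : ℕ × Fin r → ℕ × Fin r → Prop)
    (hrefl : ∀ m, le m m)
    (htot : ∀ m m', le m m' ∨ le m' m)
    (htrans : ∀ a b c, le a b → le b c → le a c)
    (hanti : ∀ a b, le a b → le b a → a = b)
    (hcompat : ∀ (k k' : ℕ) (j j' : Fin r), le (k, j) (k', j') → le (k + 1, j) (k' + 1, j'))
    (hxgt : ∀ (k : ℕ) (j : Fin r), le (k, j) (k + 1, j))
    (hwf : WellFounded (fun a b => le a b ∧ a ≠ b))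
    (S : Submodule (Polynomial 𝔽) (Fin r → Polynomial 𝔽))
    (B : Finset (Fin r → Polynomial 𝔽))
    (hspan : Submodule.span (Polynomial 𝔽) (B : Set (Fin r → Polynomial 𝔽)) = S)
    (lm : (Fin r → Polynomial 𝔽) → ℕ × Fin r)
    (hlm : ∀ b ∈ B, IsLM le b (lm b))
    (hdistinct : ∀ b ∈ B, ∀ b' ∈ B, b ≠ b' → (lm b).2 ≠ (lm b').2) :
    (∀ f ∈ S, f ≠ 0 → ∀ m, IsLM le f m → ∃ b ∈ B, (lm b).2 = m.2 ∧ (lm b).1 ≤ m.1) ∧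
    LinearIndependent (Polynomial 𝔽) (fun b : B => (b : Fin r → Polynomial 𝔽)) := by
  classical
  -- shift: compatibility with multiplication by x^d
  have shift : ∀ (d k k' : ℕ) (j j' : Fin r),
      le (k, j) (k', j') → le (k + d, j) (k' + d, j') := by
    intro d
    induction d with
    | zero => intro k k' j j' h; exact h
    | succ n ih => intro k k' j j' h; exact hcompat _ _ _ _ (ih k k' j j' h)
  -- monotone in degree for fixed basis vector
  have mono : ∀ (k k' : ℕ) (j : Fin r), k ≤ k' → le (k, j) (k', j) := by
    intro k k' j h
    induction h with
    | refl => exact hrefl _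
    | step h ih => exact htrans _ _ _ ih (hxgt _ _)
  -- the degree of the leading component
  have hbdeg : ∀ b, IsLM le b (lm b) →
      b (lm b).2 ≠ 0 ∧ (b (lm b).2).natDegree = (lm b).1 := by
    intro b hb
    have h0 : (b (lm b).2).coeff (lm b).1 ≠ 0 := hb.1
    have hne : b (lm b).2 ≠ 0 := fun h => h0 (by simp [h])
    refine ⟨hne, ?_⟩
    have h1 : (lm b).1 ≤ (b (lm b).2).natDegree := Polynomial.le_natDegree_of_ne_zero h0
    have h2 : ((b (lm b).2).natDegree, (lm b).2) ∈ msupp b := by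
      show (b (lm b).2).coeff (b (lm b).2).natDegree ≠ 0
      exact Polynomial.leadingCoeff_ne_zero.mpr hne
    have h3 := hb.2 _ h2
    have h4 : le ((lm b).1, (lm b).2) ((b (lm b).2).natDegree, (lm b).2) := mono _ _ _ h1
    have h5 := hanti _ _ h3 (by
      have : ((lm b).1, (lm b).2) = lm b := rfl
      rw [this] at h4; exact h4)
    have := congrArg Prod.fst h5
    simpa using this
  -- upper bound for the support of c • b
  have msupp_smul_le : ∀ (c : Polynomial 𝔽) b, IsLM le b (lm b) →
      ∀ m ∈ msupp (c • b), le m (c.natDegree + (lm b).1, (lm b).2) := by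
    intro c b hb m hm
    obtain ⟨n, j'⟩ := m
    have hm' : (c * b j').coeff n ≠ 0 := by
      simpa [msupp, Pi.smul_apply, smul_eq_mul] using hm
    rw [Polynomial.coeff_mul] at hm'
    obtain ⟨p, hp, hne⟩ := Finset.exists_ne_zero_of_sum_ne_zero hm'
    have hpn : p.1 + p.2 = n := (Finset.HasAntidiagonal.mem_antidiagonal).mp hp
    have hc1 : c.coeff p.1 ≠ 0 := fun h => hne (by simp [h])
    have hc2 : (b j').coeff p.2 ≠ 0 := fun h => hne (by simp [h])
    have hle1 : le (p.2, j') ((lm b).1, (lm b).2) := by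
      have := hb.2 (p.2, j') hc2
      simpa using this
    have hdeg : p.1 ≤ c.natDegree := Polynomial.le_natDegree_of_ne_zero hc1
    have h1 : le (p.2 + p.1, j') ((lm b).1 + p.1, (lm b).2) := shift _ _ _ _ _ hle1
    have h2 : le ((lm b).1 + p.1, (lm b).2) ((lm b).1 + c.natDegree, (lm b).2) :=
      mono _ _ _ (Nat.add_le_add_left hdeg _)
    have h3 := htrans _ _ _ h1 h2
    have hn : n = p.2 + p.1 := by omega
    have hc' : (lm b).1 + c.natDegree = c.natDegree + (lm b).1 := by omega
    rw [hn]; rw [hc'] at h3; exact h3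
  -- the leading monomial of c • b is present
  have msupp_smul_mem : ∀ (c : Polynomial 𝔽) b, IsLM le b (lm b) → c ≠ 0 →
      (c.natDegree + (lm b).1, (lm b).2) ∈ msupp (c • b) := by
    intro c b hb hc
    obtain ⟨hne, hdeg⟩ := hbdeg b hb
    show ((c • b) (lm b).2).coeff (c.natDegree + (lm b).1) ≠ 0
    have h1 : (c • b) (lm b).2 = c * b (lm b).2 := rfl
    rw [h1, ← hdeg, Polynomial.coeff_mul_degree_add_degree]
    exact mul_ne_zero (Polynomial.leadingCoeff_ne_zero.mpr hc)
      (Polynomial.leadingCoeff_ne_zero.mpr hne)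
  -- existence of a maximum over a nonempty finset
  have exists_max : ∀ (s : Finset (Fin r → Polynomial 𝔽)) (μ : (Fin r → Polynomial 𝔽) → ℕ × Fin r),
      s.Nonempty → ∃ a ∈ s, ∀ a' ∈ s, le (μ a') (μ a) := by
    intro s μ hs
    induction s using Finset.induction with
    | empty => simp at hs
    | @insert a s hx ih =>
      rcases s.eq_empty_or_nonempty with rfl | hs'
      · exact ⟨a, by simp, by simp [hrefl]⟩
      · obtain ⟨a', ha', hmax⟩ := ih hs'
        rcases htot (μ a) (μ a') with h | h
        · refine ⟨a', Finset.mem_insert_of_mem ha', ?_⟩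
          intro x hx'
          rcases Finset.mem_insert.mp hx' with rfl | hx'
          · exact h
          · exact hmax x hx'
        · refine ⟨a, Finset.mem_insert_self _ _, ?_⟩
          intro x hx'
          rcases Finset.mem_insert.mp hx' with rfl | hx'
          · exact hrefl _
          · exact htrans _ _ _ (hmax x hx') h
  -- the coefficient of a sum
  have coeff_sum : ∀ (c : (Fin r → Polynomial 𝔽) → Polynomial 𝔽) (m : ℕ × Fin r),
      ((∑ b ∈ B, c b • b) m.2).coeff m.1 = ∑ b ∈ B, (c b * b m.2).coeff m.1 := by
    intro c m
    rw [Finset.sum_apply]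
    rw [Polynomial.finset_sum_coeff]
    rfl
  -- main lemma: the LM of ∑ c b • b
  have main : ∀ (c : (Fin r → Polynomial 𝔽) → Polynomial 𝔽),
      (∃ b ∈ B, c b ≠ 0) →
      ∃ b ∈ B, c b ≠ 0 ∧
        ((c b).natDegree + (lm b).1, (lm b).2) ∈ msupp (∑ b ∈ B, c b • b) ∧
        ∀ m ∈ msupp (∑ b ∈ B, c b • b), le m ((c b).natDegree + (lm b).1, (lm b).2) := by
    intro c hc
    set T : Finset (Fin r → Polynomial 𝔽) := B.filter (fun b => c b ≠ 0) with hT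
    have hTne : T.Nonempty := by
      obtain ⟨b, hb, hcb⟩ := hc
      exact ⟨b, Finset.mem_filter.mpr ⟨hb, hcb⟩⟩
    obtain ⟨bs, hbsT, hbsmax⟩ :=
      exists_max T (fun b => ((c b).natDegree + (lm b).1, (lm b).2)) hTne
    have hbsB : bs ∈ B := (Finset.mem_filter.mp hbsT).1
    have hcbs : c bs ≠ 0 := (Finset.mem_filter.mp hbsT).2
    refine ⟨bs, hbsB, hcbs, ?_, ?_⟩
    · -- membership
      show ((∑ b ∈ B, c b • b) (lm bs).2).coeff ((c bs).natDegree + (lm bs).1) ≠ 0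
      rw [coeff_sum c ((c bs).natDegree + (lm bs).1, (lm bs).2)]
      rw [Finset.sum_eq_single_of_mem bs hbsB]
      · exact msupp_smul_mem (c bs) bs (hlm bs hbsB) hcbs
      · intro b hbB hne
        by_contra hcoef
        have hcb : c b ≠ 0 := fun h => hcoef (by simp [h])
        have hmem : (((c bs).natDegree + (lm bs).1, (lm bs).2) : ℕ × Fin r)
            ∈ msupp (c b • b) := hcoef
        have h1 := msupp_smul_le (c b) b (hlm b hbB) _ hmem
        have hbT : b ∈ T := Finset.mem_filter.mpr ⟨hbB, hcb⟩
        have h2 := hbsmax b hbT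
        have h3 := hanti _ _ h1 h2
        have := congrArg Prod.snd h3
        exact hdistinct bs hbsB b hbB (Ne.symm hne) (by simpa using this)
    · -- upper bound
      intro m hm
      have hm' : ((∑ b ∈ B, c b • b) m.2).coeff m.1 ≠ 0 := hm
      rw [coeff_sum c m] at hm'
      obtain ⟨b, hbB, hne⟩ := Finset.exists_ne_zero_of_sum_ne_zero hm'
      have hcb : c b ≠ 0 := fun h => hne (by simp [h])
      have hmem : m ∈ msupp (c b • b) := by
        show ((c b • b) m.2).coeff m.1 ≠ 0
        simpa [Pi.smul_apply, smul_eq_mul] using hne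
      have h1 := msupp_smul_le (c b) b (hlm b hbB) m hmem
      have hbT : b ∈ T := Finset.mem_filter.mpr ⟨hbB, hcb⟩
      exact htrans _ _ _ h1 (hbsmax b hbT)
  constructor
  · -- Gröbner criterion
    intro f hf hf0 m hmlm
    rw [← hspan] at hf
    obtain ⟨c, -, hcsum⟩ := Submodule.mem_span_finset.mp hf
    have hex : ∃ b ∈ B, c b ≠ 0 := by
      by_contra h
      push_neg at h
      apply hf0
      rw [← hcsum]
      exact Finset.sum_eq_zero fun b hb => by rw [h b hb, zero_smul]
    obtain ⟨b, hbB, hcb, hmem, hub⟩ := main c hex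
    rw [hcsum] at hmem hub
    have h1 : le ((c b).natDegree + (lm b).1, (lm b).2) m := hmlm.2 _ hmem
    have h2 : le m ((c b).natDegree + (lm b).1, (lm b).2) := hub m hmlm.1
    have h3 := hanti _ _ h2 h1
    refine ⟨b, hbB, ?_, ?_⟩
    · have := congrArg Prod.snd h3; simpa using this.symm
    · have := congrArg Prod.fst h3; simp at this; omega
  · -- linear independence
    rw [Fintype.linearIndependent_iff]
    intro g hg
    by_contra h
    push_neg at h
    obtain ⟨i0, hi0⟩ := h
    set c : (Fin r → Polynomial 𝔽) → Polynomial 𝔽 :=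
      fun b => if h : b ∈ B then g ⟨b, h⟩ else 0 with hc
    have hsum : ∑ b ∈ B, c b • b = 0 := by
      rw [← Finset.sum_attach B (fun b => c b • b)]
      have : ∀ i : B, c (i : Fin r → Polynomial 𝔽) • (i : Fin r → Polynomial 𝔽)
          = g i • (i : Fin r → Polynomial 𝔽) := by
        intro i; simp [hc, i.2]
      calc ∑ i ∈ B.attach, c (i : Fin r → Polynomial 𝔽) • (i : Fin r → Polynomial 𝔽)
          = ∑ i ∈ B.attach, g i • (i : Fin r → Polynomial 𝔽) := by
            exact Finset.sum_congr rfl fun i _ => this i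
        _ = ∑ i : B, g i • (i : Fin r → Polynomial 𝔽) := by rw [Finset.univ_eq_attach]
        _ = 0 := hg
    have hex : ∃ b ∈ B, c b ≠ 0 := ⟨i0, i0.2, by simpa [hc, i0.2] using hi0⟩
    obtain ⟨b, hbB, hcb, hmem, -⟩ := main c hex
    rw [hsum] at hmem
    exact hmem (by simp)
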